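/- Let T be a tree in which every leaf is marked, and suppose we seek a collection of vertex-disjoint paths in T (paths of length 0 allowed) whose endpoints are all marked vertices, covering as many vertices as possible; let φ(T) be the number of uncovered vertices in an optimal such collection. If every vertex of T has degree at most 2 (i.e., T is a path), then φ(T) = 0. More generally, if T has at most 6 vertices and every vertex of degree 1 in T is marked, then φ(T) = 0; the smallest tree with all leaves marked and φ(T) > 0 has 7 vertices, namely three paths of length two sharing a common endpoint where only the three leaves are marked. -/

import Mathlib

open scoped Classical

variable {V : Type*}

/-- A valid path packing of a graph `T` with marked set `B`, encoded as a
spanning linear forest `F ≤ T`: every vertex has `F`-degree at most 2, `F` is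
acyclic (so its components are paths), and every endpoint of a nontrivial path
(an `F`-degree-1 vertex) is marked. The covered vertices are those on a path:
vertices of positive `F`-degree, together with `F`-isolated marked vertices
(paths of length 0). -/
def IsGoodPacking [Fintype V] (T F : SimpleGraph V) (B : Set V) : Prop :=
  F ≤ T ∧ F.IsAcyclic ∧ (∀ v : V, F.degree v ≤ 2) ∧
    ∀ v : V, F.degree v = 1 → v ∈ B

/-- A packing covers all of `T` iff every unmarked vertex lies on a path. -/
def CoversAll [Fintype V] (F : SimpleGraph V) (B : Set V) : Prop :=
  ∀ v : V, F.degree v = 0 → v ∈ B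

/-- The 7-vertex spider: three paths of length two sharing the common endpoint
`0`; its leaves are `4, 5, 6`. -/
def spider : SimpleGraph (Fin 7) :=
  SimpleGraph.fromRel (fun u v =>
    (u, v) ∈ [((0 : Fin 7), (1 : Fin 7)), (0, 2), (0, 3), (1, 4), (2, 5), (3, 6)])

/-! ### Auxiliary machinery -/

lemma acyclic_mono' {W : Type*} {F T : SimpleGraph W} (h : F ≤ T)
    (hT : T.IsAcyclic) : F.IsAcyclic := fun _ p hp => hT (p.mapLe h) (hp.mapLe h)

/-- Number of edges in the list `s` incident to the vertex label `v`. -/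
def degL (s : List (ℕ × ℕ)) (v : ℕ) : ℕ := s.countP fun p => p.1 = v || p.2 = v

set_option maxRecDepth 10000 in
/-- The key finite check: every tree on `n ≤ 6` vertices, encoded by a parent
function in BFS order, admits a spanning linear forest whose degree-1 and
degree-0 vertices are leaves of the tree. -/
lemma keyCheck : ∀ n ∈ [2,3,4,5,6], ∀ (a : Fin 1) (b : Fin 2) (c : Fin 3) (d : Fin 4) (e : Fin 5),
    ∃ t ∈ (List.take (n-1) [(a.val,1),(b.val,2),(c.val,3),(d.val,4),(e.val,5)]).sublists,
      ∀ v ∈ [0,1,2,3,4,5],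
        degL t v ≤ 2 ∧
        (degL t v = 1 → degL (List.take (n-1) [(a.val,1),(b.val,2),(c.val,3),(d.val,4),(e.val,5)]) v ≤ 1) ∧
        (degL t v = 0 → degL (List.take (n-1) [(a.val,1),(b.val,2),(c.val,3),(d.val,4),(e.val,5)]) v ≤ 1) := by
  decide

/-- Counting incident edges in a duplicate-free list of labelled edges computes
the degree. -/
lemma deg_count {W : Type*} [Fintype W] (H : SimpleGraph W)
    (instN : ∀ u : W, Fintype (H.neighborSet u)) (idx : W → ℕ)
    (hinj : Function.Injective idx) (r : List (ℕ × ℕ)) (hnd : r.Nodup)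
    (hchar : ∀ u w, H.Adj u w ↔ (min (idx u) (idx w), max (idx u) (idx w)) ∈ r)
    (hreal : ∀ p ∈ r, ∃ u w, H.Adj u w ∧ (min (idx u) (idx w), max (idx u) (idx w)) = p)
    (v : W) : @SimpleGraph.degree W H v (instN v) = degL r (idx v) := by
  have h1 : degL r (idx v) = ((r.filter fun p => p.1 = idx v || p.2 = idx v).toFinset).card := by
    rw [List.toFinset_card_of_nodup (hnd.filter _), degL, List.countP_eq_length_filter]
  rw [h1, ← SimpleGraph.card_neighborFinset_eq_degree]
  refine Finset.card_bij (fun u _ => (min (idx v) (idx u), max (idx v) (idx u))) ?_ ?_ ?_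
  · intro u hu
    rw [SimpleGraph.mem_neighborFinset] at hu
    rw [List.mem_toFinset, List.mem_filter]
    refine ⟨(hchar v u).mp hu, ?_⟩
    simp only [Bool.or_eq_true, decide_eq_true_eq]
    omega
  · intro u1 h1 u2 h2 heq
    rw [SimpleGraph.mem_neighborFinset] at h1 h2
    have n1 : idx u1 ≠ idx v := fun h => h1.ne' (hinj h)
    have n2 : idx u2 ≠ idx v := fun h => h2.ne' (hinj h)
    rw [Prod.ext_iff] at heq
    apply hinj
    simp only at heq
    omega
  · intro p hp
    rw [List.mem_toFinset, List.mem_filter] at hp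
    obtain ⟨hpr, hq⟩ := hp
    obtain ⟨x, y, hxy, hpf⟩ := hreal p hpr
    simp only [Bool.or_eq_true, decide_eq_true_eq] at hq
    rw [Prod.ext_iff] at hpf
    simp only at hpf
    have hvm : idx x = idx v ∨ idx y = idx v := by omega
    rcases hvm with h | h
    · obtain rfl := hinj h
      refine ⟨y, ?_, ?_⟩
      · rw [SimpleGraph.mem_neighborFinset]; exact hxy
      · rw [Prod.ext_iff]; constructor <;> simp only [] <;> omega
    · obtain rfl := hinj h
      refine ⟨x, ?_, ?_⟩
      · rw [SimpleGraph.mem_neighborFinset]; exact hxy.symm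
      · rw [Prod.ext_iff]; constructor <;> simp only [] <;> omega

set_option maxHeartbeats 1000000 in
set_option maxRecDepth 10000 in
/-- For a tree `T` with every vertex of degree ≤ 1 marked: if all degrees are at
most 2 (`T` is a path) then `φ(T) = 0`; if `T` has at most 6 vertices then
`φ(T) = 0`; and the 7-vertex spider with only its three leaves marked has
`φ(T) > 0` (no good packing covers every vertex). -/
theorem phi_small_trees :
    (∀ (V : Type*) [Fintype V] (T : SimpleGraph V) (B : Set V),
      T.IsTree → (∀ v : V, T.degree v ≤ 1 → v ∈ B) →
      (∀ v : V, T.degree v ≤ 2) →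
      ∃ F : SimpleGraph V, IsGoodPacking T F B ∧ CoversAll F B) ∧
    (∀ (V : Type*) [Fintype V] (T : SimpleGraph V) (B : Set V),
      T.IsTree → (∀ v : V, T.degree v ≤ 1 → v ∈ B) →
      Fintype.card V ≤ 6 →
      ∃ F : SimpleGraph V, IsGoodPacking T F B ∧ CoversAll F B) ∧
    (∀ F : SimpleGraph (Fin 7),
      IsGoodPacking spider F {4, 5, 6} → ¬ CoversAll F {4, 5, 6}) := by
  refine ⟨?_, ?_, ?_⟩
  · -- Part 1: paths
    intro V _ T B htree hB hdeg
    exact ⟨T, ⟨le_refl T, htree.2, hdeg, fun v h => hB v (by omega)⟩,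
      fun v h => hB v (by omega)⟩
  · -- Part 2: trees on at most 6 vertices
    intro V _ T B htree hB hcard
    by_cases hV1 : Fintype.card V ≤ 1
    · -- at most one vertex: no edges at all
      have hdeg0 : ∀ v : V, T.degree v = 0 := by
        intro v
        rw [← SimpleGraph.card_neighborFinset_eq_degree, Finset.card_eq_zero]
        rw [Finset.eq_empty_iff_forall_notMem]
        intro u hu
        rw [SimpleGraph.mem_neighborFinset] at hu
        have : 1 < Fintype.card V := Fintype.one_lt_card_iff.mpr ⟨v, u, hu.ne⟩
        omega
      refine ⟨T, ⟨le_refl T, htree.2, ?_, ?_⟩, ?_⟩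
      · intro v; rw [hdeg0]; omega
      · intro v h; rw [hdeg0] at h; omega
      · intro v _; exact hB v (by rw [hdeg0 v]; omega)
    · -- main case: at least two vertices
      obtain ⟨n, hn⟩ : ∃ n, Fintype.card V = n := ⟨_, rfl⟩
      have hn2 : 2 ≤ n := by omega
      have hn6 : n ≤ 6 := by omega
      have hVne : Nonempty V := by
        rw [← Fintype.card_pos_iff]; omega
      obtain ⟨r⟩ := hVne
      have hconn := htree.1
      -- parent existence via distance to the root
      have hpar : ∀ v : V, v ≠ r → ∃ u, T.Adj u v ∧ T.dist r u + 1 = T.dist r v := by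
        intro v hv
        have hr : T.dist v r ≠ 0 := by
          rw [SimpleGraph.dist_ne_zero_iff_ne_and_reachable]
          exact ⟨hv, hconn.preconnected v r⟩
        obtain ⟨p, hp⟩ := SimpleGraph.exists_walk_of_dist_ne_zero hr
        cases p with
        | nil => exact absurd rfl hv
        | @cons _ u _ hadj q =>
          refine ⟨u, hadj.symm, ?_⟩
          have h1 : T.dist r u ≤ q.length := by
            rw [SimpleGraph.dist_comm]; exact SimpleGraph.dist_le q
          have h2 : q.length + 1 = T.dist v r := by
            simpa [SimpleGraph.Walk.length_cons] using hp
          obtain ⟨w1, hw1⟩ := (hconn.preconnected r u).exists_walk_length_eq_dist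
          have h3 : T.dist r v ≤ T.dist r u + 1 := by
            have hle3 := SimpleGraph.dist_le (w1.concat hadj.symm)
            rw [SimpleGraph.Walk.length_concat, hw1] at hle3
            exact hle3
          have h4 : T.dist v r = T.dist r v := SimpleGraph.dist_comm
          omega
      -- a linear order on V making distance to the root monotone
      let ψ : V → Lex (ℕ × Fin (Fintype.card V)) :=
        fun v => toLex (T.dist r v, Fintype.equivFin V v)
      have hψinj : Function.Injective ψ := by
        intro u v h
        have h2 : (T.dist r u, Fintype.equivFin V u) = (T.dist r v, Fintype.equivFin V v) :=
          toLex.injective h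
        exact (Fintype.equivFin V).injective (congrArg Prod.snd h2)
      letI lo : LinearOrder V := LinearOrder.lift' ψ hψinj
      have hlt_def : ∀ u v : V, u < v ↔ ψ u < ψ v := fun u v => Iff.rfl
      have hmono : ∀ u v : V, T.dist r u < T.dist r v → u < v := by
        intro u v h
        rw [hlt_def, Prod.Lex.lt_iff]
        exact Or.inl h
      let e : V ≃o Fin n := (monoEquivOfFin V hn).symm
      let idx : V → ℕ := fun v => (e v : ℕ)
      have hidxinj : Function.Injective idx := fun u v h =>
        e.injective (Fin.val_injective h)
      have hidxlt : ∀ v, idx v < n := fun v => (e v).isLt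
      have hrle : ∀ v : V, r ≤ v := by
        intro v
        rcases eq_or_ne v r with rfl | hv
        · exact le_refl v
        · refine le_of_lt (hmono r v ?_)
          rw [SimpleGraph.dist_self]
          have : T.dist r v ≠ 0 := by
            rw [SimpleGraph.dist_ne_zero_iff_ne_and_reachable]
            exact ⟨hv.symm, hconn.preconnected r v⟩
          omega
      have hroot0 : idx r = 0 := by
        have h2 : e r ≤ e (e.symm ⟨0, by omega⟩) := e.le_iff_le.mpr (hrle _)
        rw [OrderIso.apply_symm_apply] at h2
        have := Fin.le_def.mp h2
        simpa [idx] using this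
      let vert : ℕ → V := fun j => if h : j < n then e.symm ⟨j, h⟩ else r
      have hvert_idx : ∀ j, j < n → idx (vert j) = j := by
        intro j h
        simp only [vert, dif_pos h, idx, OrderIso.apply_symm_apply]
      have hvert_ne : ∀ j, 1 ≤ j → j < n → vert j ≠ r := by
        intro j h1 h2 hcon
        have := hvert_idx j h2
        rw [hcon, hroot0] at this
        omega
      let par : V → V := fun v => if h : v = r then r else (hpar v h).choose
      have hparAdj : ∀ v, v ≠ r →
          T.Adj (par v) v ∧ T.dist r (par v) + 1 = T.dist r v := by
        intro v h
        simp only [par, dif_neg h]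
        exact (hpar v h).choose_spec
      have hparlt_v : ∀ v, v ≠ r → par v < v := by
        intro v h
        exact hmono _ _ (by have := (hparAdj v h).2; omega)
      have hparlt : ∀ v, v ≠ r → idx (par v) < idx v := by
        intro v h
        exact Fin.lt_def.mp (e.lt_iff_lt.mpr (hparlt_v v h))
      let A : ℕ → ℕ := fun j => if h : 1 ≤ j ∧ j < n then idx (par (vert j)) else 0
      have hAval : ∀ j, 1 ≤ j → j < n → A j = idx (par (vert j)) := by
        intro j h1 h2; simp only [A, dif_pos (And.intro h1 h2)]
      have hAlt : ∀ j, 1 ≤ j → j < n → A j < j := by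
        intro j h1 h2
        rw [hAval j h1 h2]
        have := hparlt (vert j) (hvert_ne j h1 h2)
        rw [hvert_idx j h2] at this
        exact this
      have hAb : ∀ j, 1 ≤ j → A j < j := by
        intro j h1
        by_cases h : j < n
        · exact hAlt j h1 h
        · simp only [A]
          rw [dif_neg (by omega)]
          omega
      -- invoke the finite check
      have hmemn : n ∈ [2,3,4,5,6] := by
        simp only [List.mem_cons, List.not_mem_nil, or_false]
        omega
      obtain ⟨t, htmem, hcond⟩ := keyCheck n hmemn
        ⟨A 1, hAb 1 (by omega)⟩ ⟨A 2, hAb 2 (by omega)⟩ ⟨A 3, hAb 3 (by omega)⟩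
        ⟨A 4, hAb 4 (by omega)⟩ ⟨A 5, hAb 5 (by omega)⟩
      have htsl : List.Sublist t (List.take (n-1) [(A 1,1),(A 2,2),(A 3,3),(A 4,4),(A 5,5)]) :=
        List.mem_sublists.mp htmem
      have hcond' : ∀ v ∈ [0,1,2,3,4,5],
          degL t v ≤ 2 ∧
          (degL t v = 1 → degL (List.take (n-1) [(A 1,1),(A 2,2),(A 3,3),(A 4,4),(A 5,5)]) v ≤ 1) ∧
          (degL t v = 0 → degL (List.take (n-1) [(A 1,1),(A 2,2),(A 3,3),(A 4,4),(A 5,5)]) v ≤ 1) :=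
        hcond
      clear htmem hcond
      have hn5 : n = 2 ∨ n = 3 ∨ n = 4 ∨ n = 5 ∨ n = 6 := by omega
      have hsmem : ∀ p : ℕ × ℕ,
          p ∈ List.take (n-1) [(A 1,1),(A 2,2),(A 3,3),(A 4,4),(A 5,5)] ↔
            ∃ j, 1 ≤ j ∧ j < n ∧ p = (A j, j) := by
        intro p
        constructor
        · intro hp
          rcases hn5 with h|h|h|h|h <;> rw [h] at hp <;>
            simp only [List.take, List.mem_cons, List.not_mem_nil, or_false] at hp
          · exact ⟨1, by omega, by omega, hp⟩
          · rcases hp with hp|hp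
            · exact ⟨1, by omega, by omega, hp⟩
            · exact ⟨2, by omega, by omega, hp⟩
          · rcases hp with hp|hp|hp
            · exact ⟨1, by omega, by omega, hp⟩
            · exact ⟨2, by omega, by omega, hp⟩
            · exact ⟨3, by omega, by omega, hp⟩
          · rcases hp with hp|hp|hp|hp
            · exact ⟨1, by omega, by omega, hp⟩
            · exact ⟨2, by omega, by omega, hp⟩
            · exact ⟨3, by omega, by omega, hp⟩
            · exact ⟨4, by omega, by omega, hp⟩
          · rcases hp with hp|hp|hp|hp|hp
            · exact ⟨1, by omega, by omega, hp⟩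
            · exact ⟨2, by omega, by omega, hp⟩
            · exact ⟨3, by omega, by omega, hp⟩
            · exact ⟨4, by omega, by omega, hp⟩
            · exact ⟨5, by omega, by omega, hp⟩
        · rintro ⟨j, hj1, hjn, rfl⟩
          rcases hn5 with h|h|h|h|h <;> rw [h] <;> rw [h] at hjn <;>
            simp only [List.take, List.mem_cons, List.not_mem_nil, or_false] <;>
            interval_cases j <;> simp
      have hsnodup : (List.take (n-1) [(A 1,1),(A 2,2),(A 3,3),(A 4,4),(A 5,5)]).Nodup := by
        rcases hn5 with h|h|h|h|h <;> rw [h] <;>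
          simp only [List.take] <;> simp [Prod.ext_iff]
      -- the counting argument: every edge of T joins a vertex to its parent
      haveI : NeZero n := ⟨by omega⟩
      have hsymm_r : e.symm ⟨0, by omega⟩ = r := by
        apply hidxinj
        rw [hroot0]
        simp only [idx, OrderIso.apply_symm_apply]
      let m : Fin n → Sym2 V := fun i => s(par (e.symm i), e.symm i)
      have hsymm_ne : ∀ i : Fin n, i ≠ 0 → e.symm i ≠ r := by
        intro i hi hcon
        apply hi
        rw [← hsymm_r] at hcon
        have := e.symm.injective hcon
        exact this.trans (by ext; simp)
      have hm_into : ∀ i ∈ Finset.univ.erase (0 : Fin n), m i ∈ T.edgeFinset := by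
        intro i hi
        rw [SimpleGraph.mem_edgeFinset, SimpleGraph.mem_edgeSet]
        exact (hparAdj _ (hsymm_ne i (Finset.ne_of_mem_erase hi))).1
      have hm_inj : Set.InjOn m (Finset.univ.erase (0 : Fin n)) := by
        intro i hi j hj hij
        rw [Finset.coe_erase, Set.mem_diff] at hi hj
        have hine := hsymm_ne i (by simpa using hi.2)
        have hjne := hsymm_ne j (by simpa using hj.2)
        rw [Sym2.eq_iff] at hij
        rcases hij with ⟨h1, h2⟩ | ⟨h1, h2⟩
        · exact e.symm.injective h2
        · exfalso
          have l1 := hparlt_v _ hine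
          have l2 := hparlt_v _ hjne
          rw [h1] at l1
          rw [← h2] at l2
          exact absurd (l1.trans l2) (lt_irrefl _)
      have hedgecard : T.edgeFinset.card + 1 = n := by
        rw [← hn]; exact htree.card_edgeFinset
      have himg : (Finset.univ.erase (0 : Fin n)).image m = T.edgeFinset := by
        apply Finset.eq_of_subset_of_card_le
        · intro x hx
          obtain ⟨i, hi, rfl⟩ := Finset.mem_image.mp hx
          exact hm_into i hi
        · rw [Finset.card_image_of_injOn hm_inj, Finset.card_erase_of_mem (Finset.mem_univ _),
            Finset.card_univ, Fintype.card_fin]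
          omega
      have hschar : ∀ u w : V, T.Adj u w ↔
          (min (idx u) (idx w), max (idx u) (idx w)) ∈
            List.take (n-1) [(A 1,1),(A 2,2),(A 3,3),(A 4,4),(A 5,5)] := by
        intro u w
        constructor
        · intro hadj
          have hmem : s(u,w) ∈ (Finset.univ.erase (0 : Fin n)).image m := by
            rw [himg, SimpleGraph.mem_edgeFinset, SimpleGraph.mem_edgeSet]
            exact hadj
          obtain ⟨i, hi, hmi⟩ := Finset.mem_image.mp hmem
          have hine := hsymm_ne i (Finset.ne_of_mem_erase hi)
          have hj1 : 1 ≤ i.val := by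
            have : i.val ≠ 0 := fun hc => (Finset.ne_of_mem_erase hi) (by ext; simp [hc])
            omega
          have hvv : vert i.val = e.symm i := by
            simp [vert]
          have hAi : A i.val = idx (par (e.symm i)) := by
            rw [hAval i.val hj1 i.isLt, hvv]
          have hii : idx (e.symm i) = i.val := by
            simp only [idx, OrderIso.apply_symm_apply]
          have hplt : idx (par (e.symm i)) < idx (e.symm i) := hparlt _ hine
          rw [hsmem]
          refine ⟨i.val, hj1, i.isLt, ?_⟩
          rcases Sym2.eq_iff.mp hmi with ⟨h1, h2⟩ | ⟨h1, h2⟩ <;>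
            rw [← h1, ← h2, Prod.ext_iff] <;>
            exact ⟨by omega, by omega⟩
        · intro hmem
          obtain ⟨j, hj1, hjn, hpj⟩ := (hsmem _).mp hmem
          have hv := hvert_ne j hj1 hjn
          have hAdj := (hparAdj (vert j) hv).1
          have hA := hAval j hj1 hjn
          have hij := hvert_idx j hjn
          have hplt : idx (par (vert j)) < idx (vert j) := hparlt _ hv
          rw [Prod.ext_iff] at hpj
          simp only at hpj
          have hne : idx u ≠ idx w := by
            intro hcon
            rw [hcon] at hpj
            have := hAb j hj1
            omega
          obtain ⟨hpj1, hpj2⟩ := hpj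
          rw [hA] at hpj1
          have hcases : (idx u = idx (par (vert j)) ∧ idx w = idx (vert j)) ∨
              (idx u = idx (vert j) ∧ idx w = idx (par (vert j))) := by
            omega
          rcases hcases with ⟨ha, hb⟩ | ⟨ha, hb⟩
          · rw [hidxinj ha, hidxinj hb]; exact hAdj
          · rw [hidxinj ha, hidxinj hb]; exact hAdj.symm
      have hsreal : ∀ p ∈ List.take (n-1) [(A 1,1),(A 2,2),(A 3,3),(A 4,4),(A 5,5)],
          ∃ u w, T.Adj u w ∧ (min (idx u) (idx w), max (idx u) (idx w)) = p := by
        intro p hp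
        obtain ⟨j, hj1, hjn, rfl⟩ := (hsmem p).mp hp
        have hv := hvert_ne j hj1 hjn
        refine ⟨par (vert j), vert j, (hparAdj _ hv).1, ?_⟩
        have hplt : idx (par (vert j)) < idx (vert j) := hparlt _ hv
        have hA := hAval j hj1 hjn
        have hij := hvert_idx j hjn
        rw [Prod.ext_iff]
        constructor <;> simp only [hA, hij] <;> omega
      have hTdeg : ∀ v, T.degree v =
          degL (List.take (n-1) [(A 1,1),(A 2,2),(A 3,3),(A 4,4),(A 5,5)]) (idx v) :=
        deg_count T _ idx hidxinj _ hsnodup hschar hsreal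
      -- the packing
      have htss : ∀ p ∈ t, p ∈ List.take (n-1) [(A 1,1),(A 2,2),(A 3,3),(A 4,4),(A 5,5)] :=
        fun p hp => htsl.subset hp
      have htnd : t.Nodup := hsnodup.sublist htsl
      let F : SimpleGraph V :=
        { Adj := fun u w => u ≠ w ∧ (min (idx u) (idx w), max (idx u) (idx w)) ∈ t
          symm := ⟨by
            intro u w h
            refine ⟨h.1.symm, ?_⟩
            rw [min_comm, max_comm]
            exact h.2⟩
          loopless := ⟨fun v h => h.1 rfl⟩ }
      have hFadj : ∀ u w, F.Adj u w ↔
          u ≠ w ∧ (min (idx u) (idx w), max (idx u) (idx w)) ∈ t := fun u w => Iff.rfl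
      have hFchar : ∀ u w, F.Adj u w ↔ (min (idx u) (idx w), max (idx u) (idx w)) ∈ t := by
        intro u w
        rw [hFadj]
        constructor
        · exact fun h => h.2
        · intro h
          refine ⟨?_, h⟩
          obtain ⟨j, hj1, hjn, hpj⟩ := (hsmem _).mp (htss _ h)
          rw [Prod.ext_iff] at hpj
          simp only at hpj
          intro hcon
          rw [hcon] at hpj
          have := hAb j hj1
          omega
      have hFle : F ≤ T := by
        intro u w h
        exact (hschar u w).mpr (htss _ ((hFchar u w).mp h))
      have hFreal : ∀ p ∈ t, ∃ u w, F.Adj u w ∧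
          (min (idx u) (idx w), max (idx u) (idx w)) = p := by
        intro p hp
        obtain ⟨x, y, hxy, hpf⟩ := hsreal p (htss p hp)
        exact ⟨x, y, (hFchar x y).mpr (by rw [hpf]; exact hp), hpf⟩
      have hFdeg : ∀ (instN : ∀ u : V, Fintype (F.neighborSet u)) (v : V),
          @SimpleGraph.degree V F v (instN v) = degL t (idx v) :=
        fun instN => deg_count F instN idx hidxinj t htnd hFchar hFreal
      have hidxmem : ∀ v : V, idx v ∈ [0,1,2,3,4,5] := by
        intro v
        have := hidxlt v
        simp only [List.mem_cons, List.not_mem_nil, or_false]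
        omega
      refine ⟨F, ⟨hFle, acyclic_mono' hFle htree.2, ?_, ?_⟩, ?_⟩
      · intro v
        convert (hFdeg (fun _ => inferInstance) v).trans_le (hcond' (idx v) (hidxmem v)).1
      · intro v h
        apply hB
        rw [hTdeg]
        exact (hcond' (idx v) (hidxmem v)).2.1 ((hFdeg (fun _ => inferInstance) v).symm.trans (by convert h))
      · intro v h
        apply hB
        rw [hTdeg]
        exact (hcond' (idx v) (hidxmem v)).2.2 ((hFdeg (fun _ => inferInstance) v).symm.trans (by convert h))
  · -- Part 3: the spider
    intro F hF hcov
    obtain ⟨hle, hac, hdeg2, hdeg1⟩ := hF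
    have key3 : ∀ k : Fin 7, (k = 1 ∨ k = 2 ∨ k = 3) → F.Adj 0 k := by
      intro k hk
      have hknB : k ∉ ({4,5,6} : Set (Fin 7)) := by
        simp only [Set.mem_insert_iff, Set.mem_singleton_iff]
        rcases hk with rfl|rfl|rfl <;> decide
      have h2 : F.degree k = 2 := by
        have ha := hdeg2 k
        have h0 : F.degree k ≠ 0 := fun h => hknB (hcov k h)
        have h1 : F.degree k ≠ 1 := fun h => hknB (hdeg1 k h)
        omega
      have hsub : F.neighborFinset k ⊆ {0, k + 3} := by
        intro x hx
        rw [SimpleGraph.mem_neighborFinset] at hx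
        have hs := hle hx
        rw [spider, SimpleGraph.fromRel_adj] at hs
        clear hx
        revert x
        rcases hk with rfl|rfl|rfl <;> decide
      have hcard2 : ({0, k+3} : Finset (Fin 7)).card ≤ (F.neighborFinset k).card := by
        rw [SimpleGraph.card_neighborFinset_eq_degree, h2]
        rcases hk with rfl|rfl|rfl <;> decide
      have heq : F.neighborFinset k = {0, k+3} :=
        Finset.eq_of_subset_of_card_le hsub hcard2
      have h0m : (0 : Fin 7) ∈ F.neighborFinset k := by
        rw [heq]; exact Finset.mem_insert_self _ _
      rw [SimpleGraph.mem_neighborFinset] at h0m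
      exact h0m.symm
    have hsub3 : ({1,2,3} : Finset (Fin 7)) ⊆ F.neighborFinset 0 := by
      intro x hx
      rw [SimpleGraph.mem_neighborFinset]
      have hmem123 : ∀ y : Fin 7, y ∈ ({1,2,3} : Finset (Fin 7)) → y = 1 ∨ y = 2 ∨ y = 3 := by
        decide
      exact key3 x (hmem123 x hx)
    have hc3 := Finset.card_le_card hsub3
    rw [SimpleGraph.card_neighborFinset_eq_degree] at hc3
    have hcc : ({1,2,3} : Finset (Fin 7)).card = 3 := by decide
    have := hdeg2 0
    omega
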